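/- Let β > 0 and let g : (0, ∞) → ℝ be any function such that for all sufficiently large r, g(r) ≥ 2 and Γ(g(r)) = r^{2/β}. Then g(r) · β · log log r / (2 · log r) → 1 as r → ∞. -/

import Mathlib

open Filter Real Finset

lemma one_le_Gamma_of_two_le {x : ℝ} (hx : 2 ≤ x) : 1 ≤ Real.Gamma x := by
  have hpos : 0 < Real.Gamma x := Real.Gamma_pos_of_pos (by linarith)
  rcases eq_or_lt_of_le hx with h | h
  · rw [← h, Real.Gamma_two]
  · have hc := Real.convexOn_log_Gamma.slope_mono_adjacent
      (x := 1) (y := 2) (z := x) (by norm_num : (1:ℝ) ∈ Set.Ioi 0)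
      (by simp; linarith : x ∈ Set.Ioi 0) (by norm_num) h
    simp only [Function.comp_apply, Real.Gamma_one, Real.Gamma_two, Real.log_one] at hc
    have h0 : 0 ≤ Real.log (Real.Gamma x) := by
      have hx2 : 0 < x - 2 := by linarith
      have := hc
      rw [div_le_div_iff₀ (by norm_num) hx2] at this
      nlinarith
    exact (Real.log_nonneg_iff hpos).mp h0

lemma Gamma_le_two_of_mem {x : ℝ} (h2 : 2 ≤ x) (h3 : x ≤ 3) : Real.Gamma x ≤ 2 := by
  have hpos : 0 < Real.Gamma x := Real.Gamma_pos_of_pos (by linarith)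
  have key : Real.log (Real.Gamma x) ≤ Real.log 2 := by
    have hc := Real.convexOn_log_Gamma.2
      (by norm_num : (2:ℝ) ∈ Set.Ioi 0) (by norm_num : (3:ℝ) ∈ Set.Ioi 0)
      (by linarith : (0:ℝ) ≤ 3 - x) (by linarith : (0:ℝ) ≤ x - 2) (by ring)
    have hx' : (3 - x) • (2:ℝ) + (x - 2) • (3:ℝ) = x := by simp [smul_eq_mul]; ring
    rw [hx'] at hc
    simp only [Function.comp_apply, Real.Gamma_two, Real.log_one, smul_eq_mul,
      mul_zero, zero_add] at hc
    have h3g : Real.Gamma 3 = 2 := by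
      have : Real.Gamma (2+1) = 2 * Real.Gamma 2 := Real.Gamma_add_one (by norm_num)
      norm_num [Real.Gamma_two] at this; norm_num [this]
    rw [h3g] at hc
    calc Real.log (Real.Gamma x) ≤ (x-2) * Real.log 2 := hc
      _ ≤ 1 * Real.log 2 := by
          apply mul_le_mul_of_nonneg_right (by linarith) (Real.log_nonneg (by norm_num))
      _ = Real.log 2 := one_mul _
  calc Real.Gamma x = Real.exp (Real.log (Real.Gamma x)) := (Real.exp_log hpos).symm
    _ ≤ Real.exp (Real.log 2) := Real.exp_le_exp.mpr key
    _ = 2 := Real.exp_log (by norm_num)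

lemma Gamma_prod (x : ℝ) : ∀ n : ℕ, 2 ≤ x - n →
    Real.Gamma x = (∏ k ∈ Finset.range n, (x - 1 - k)) * Real.Gamma (x - n) := by
  intro n
  induction n with
  | zero => simp
  | succ n ih =>
    intro h
    have hn : 2 ≤ x - n := by push_cast at h ⊢; linarith
    rw [ih hn, Finset.prod_range_succ]
    have : Real.Gamma (x - n) = (x - 1 - n) * Real.Gamma (x - (n+1)) := by
      have hne : x - ((n:ℝ)+1) ≠ 0 := by push_cast at h; intro h0; rw [h0] at h; norm_num at h
      have := Real.Gamma_add_one hne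
      have hxx : x - ((n:ℝ)+1) + 1 = x - n := by ring
      rw [hxx] at this
      rw [this]; push_cast; ring_nf
    rw [this]; push_cast; ring

lemma floor_sub_facts {x : ℝ} (hx : 2 ≤ x) :
    ∃ n : ℕ, (n:ℝ) ≤ x - 2 ∧ x - 3 < (n:ℝ) ∧ 2 ≤ x - n ∧ x - n ≤ 3 := by
  have h2 : (2:ℤ) ≤ ⌊x⌋ := by
    rw [Int.le_floor]; exact_mod_cast hx
  refine ⟨(⌊x⌋ - 2).toNat, ?_, ?_, ?_, ?_⟩ <;>
  · have hcast : (((⌊x⌋ - 2).toNat : ℤ) : ℝ) = (⌊x⌋:ℝ) - 2 := by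
      rw [Int.toNat_of_nonneg (by omega)]; push_cast; ring
    have h1 : (⌊x⌋:ℝ) ≤ x := Int.floor_le x
    have h2' : x < (⌊x⌋:ℝ) + 1 := Int.lt_floor_add_one x
    rw [show (((⌊x⌋ - 2).toNat : ℕ) : ℝ) = (((⌊x⌋ - 2).toNat : ℤ) : ℝ) by push_cast; ring, hcast]
    linarith

lemma log_Gamma_le {x : ℝ} (hx : 2 ≤ x) : Real.log (Real.Gamma x) ≤ x * Real.log x := by
  obtain ⟨n, hn1, hn2, hn3, hn4⟩ := floor_sub_facts hx
  have hG : Real.Gamma x = (∏ k ∈ Finset.range n, (x - 1 - k)) * Real.Gamma (x - n) :=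
    Gamma_prod x n hn3
  have hfac : ∀ k ∈ Finset.range n, (0:ℝ) < x - 1 - k ∧ x - 1 - k ≤ x := by
    intro k hk
    have hk' : (k:ℝ) ≤ (n:ℝ) - 1 := by
      have := Finset.mem_range.mp hk
      have : (k:ℝ) + 1 ≤ (n:ℝ) := by exact_mod_cast this
      linarith
    have : (0:ℝ) ≤ (k:ℝ) := Nat.cast_nonneg k
    constructor <;> linarith
  have hx0 : (0:ℝ) < x := by linarith
  have hlogx : Real.log 2 ≤ Real.log x := Real.log_le_log (by norm_num) hx
  have hlogx0 : 0 < Real.log x := lt_of_lt_of_le (Real.log_pos (by norm_num) |>.le.lt_of_ne' (by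
      intro h; exact absurd h (ne_of_gt (Real.log_pos (by norm_num))))) hlogx
  have hP : (∏ k ∈ Finset.range n, (x - 1 - k)) ≤ x ^ n := by
    calc (∏ k ∈ Finset.range n, (x - 1 - k)) ≤ ∏ k ∈ Finset.range n, x :=
          Finset.prod_le_prod (fun k hk => (hfac k hk).1.le) (fun k hk => (hfac k hk).2)
      _ = x ^ n := by rw [Finset.prod_const, Finset.card_range]
  have hGle : Real.Gamma x ≤ x ^ n * 2 := by
    rw [hG]
    have h2 := Gamma_le_two_of_mem hn3 hn4
    have hGpos' : 0 < Real.Gamma (x - n) := Real.Gamma_pos_of_pos (by linarith)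
    have hPpos : 0 < ∏ k ∈ Finset.range n, (x - 1 - k) :=
      Finset.prod_pos (fun k hk => (hfac k hk).1)
    exact mul_le_mul hP h2 hGpos'.le (by positivity)
  have hGpos : 0 < Real.Gamma x := Real.Gamma_pos_of_pos hx0
  calc Real.log (Real.Gamma x) ≤ Real.log (x ^ n * 2) := Real.log_le_log hGpos hGle
    _ = n * Real.log x + Real.log 2 := by
        rw [Real.log_mul (by positivity) (by norm_num), Real.log_pow]
    _ ≤ (x - 2) * Real.log x + Real.log x := by
        have := mul_le_mul_of_nonneg_right hn1 hlogx0.le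
        linarith
    _ ≤ x * Real.log x := by nlinarith

lemma fact_lower : ∀ n : ℕ, ((n:ℝ) / Real.exp 1) ^ n ≤ n.factorial := by
  intro n
  induction n with
  | zero => simp
  | succ n ih =>
    rcases Nat.eq_zero_or_pos n with rfl | hn
    · simp only [Nat.cast_one, Nat.factorial_one, Nat.cast_ofNat, zero_add, pow_one]
      rw [div_le_one (Real.exp_pos 1)]
      have := Real.add_one_le_exp (1:ℝ); push_cast; linarith
    · have hnR : (0:ℝ) < n := by exact_mod_cast hn
      have hkey : ((n:ℝ) + 1) ^ n ≤ Real.exp 1 * (n:ℝ) ^ n := by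
        have h1 : ((n:ℝ) + 1) / n ≤ Real.exp (1 / n) := by
          rw [add_div, div_self hnR.ne']
          have := Real.add_one_le_exp (1 / (n:ℝ))
          linarith
        have h2 : (((n:ℝ) + 1) / n) ^ n ≤ Real.exp (1/n) ^ n :=
          pow_le_pow_left₀ (by positivity) h1 n
        rw [← Real.exp_nat_mul, mul_one_div, div_self hnR.ne' ] at h2
        · rw [div_pow, div_le_iff₀ (by positivity)] at h2
          linarith [h2]
      have step : (((n:ℝ) + 1) / Real.exp 1) ^ (n + 1) ≤ ((n:ℝ) + 1) * ((n:ℝ)/Real.exp 1) ^ n := by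
        rw [pow_succ, div_pow, div_pow]
        rw [div_mul_div_comm]
        rw [div_le_iff₀ (by positivity)]
        have e1 : (0:ℝ) < Real.exp 1 := Real.exp_pos 1
        have expand : ((n:ℝ)+1) * ((n:ℝ)^n / Real.exp 1 ^ n) * (Real.exp 1 ^ n * Real.exp 1)
            = ((n:ℝ)+1) * (n:ℝ)^n * Real.exp 1 := by
          field_simp
        rw [expand]
        calc ((n:ℝ)+1)^n * ((n:ℝ)+1) ≤ (Real.exp 1 * (n:ℝ)^n) * ((n:ℝ)+1) :=
              mul_le_mul_of_nonneg_right hkey (by positivity)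
          _ = ((n:ℝ)+1) * (n:ℝ)^n * Real.exp 1 := by ring
      push_cast
      calc (((n:ℝ)+1) / Real.exp 1) ^ (n+1) ≤ ((n:ℝ)+1) * ((n:ℝ)/Real.exp 1) ^ n := step
        _ ≤ ((n:ℝ)+1) * n.factorial := mul_le_mul_of_nonneg_left ih (by positivity)
        _ ≤ ((n+1).factorial : ℝ) := by rw [Nat.factorial_succ]; push_cast; linarith

lemma prod_desc (n : ℕ) : (∏ k ∈ Finset.range n, ((n:ℝ) - k)) = n.factorial := by
  have h : (∏ k ∈ Finset.range n, ((n:ℝ) - k)) = ((∏ k ∈ Finset.range n, (n - k) : ℕ) : ℝ) := by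
    rw [Nat.cast_prod]
    apply Finset.prod_congr rfl
    intro k hk
    rw [Nat.cast_sub (Finset.mem_range.mp hk).le]
  rw [h]
  congr 1
  calc (∏ k ∈ Finset.range n, (n - k)) = ∏ k ∈ Finset.range n, (n - 1 - k + 1) := by
        apply Finset.prod_congr rfl
        intro k hk
        have := Finset.mem_range.mp hk
        omega
    _ = ∏ k ∈ Finset.range n, (k + 1) := Finset.prod_range_reflect (fun i => i + 1) n
    _ = n.factorial := Finset.prod_range_add_one_eq_factorial n

lemma log_Gamma_ge {x : ℝ} (hx : 4 ≤ x) :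
    (x - 3) * Real.log (x - 3) - x ≤ Real.log (Real.Gamma x) := by
  obtain ⟨n, hn1, hn2, hn3, hn4⟩ := floor_sub_facts (by linarith : (2:ℝ) ≤ x)
  have hnR : (1:ℝ) ≤ (n:ℝ) := by linarith
  have hG : Real.Gamma x = (∏ k ∈ Finset.range n, (x - 1 - k)) * Real.Gamma (x - n) :=
    Gamma_prod x n hn3
  have hP : ((n.factorial : ℝ)) ≤ ∏ k ∈ Finset.range n, (x - 1 - k) := by
    rw [← prod_desc n]
    apply Finset.prod_le_prod
    · intro k hk
      have hk' : (k:ℝ) + 1 ≤ (n:ℝ) := by exact_mod_cast Finset.mem_range.mp hk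
      linarith
    · intro k hk; linarith
  have hGge : ((n:ℝ) / Real.exp 1) ^ n ≤ Real.Gamma x := by
    calc ((n:ℝ) / Real.exp 1) ^ n ≤ (n.factorial : ℝ) := fact_lower n
      _ ≤ ∏ k ∈ Finset.range n, (x - 1 - k) := hP
      _ ≤ Real.Gamma x := by
          rw [hG]
          have hpp : (0:ℝ) < ∏ k ∈ Finset.range n, (x - 1 - k) :=
            Finset.prod_pos (fun k hk => by
              have hk' : (k:ℝ) + 1 ≤ (n:ℝ) := by exact_mod_cast Finset.mem_range.mp hk
              linarith)
          nlinarith [one_le_Gamma_of_two_le hn3]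
  have hGpos : 0 < Real.Gamma x := Real.Gamma_pos_of_pos (by linarith)
  have hlog : Real.log (((n:ℝ) / Real.exp 1) ^ n) ≤ Real.log (Real.Gamma x) :=
    Real.log_le_log (by positivity) hGge
  have heq : Real.log (((n:ℝ) / Real.exp 1) ^ n) = n * (Real.log n - 1) := by
    rw [Real.log_pow, Real.log_div (by positivity) (Real.exp_ne_zero 1), Real.log_exp]
  rw [heq] at hlog
  have hmono : (x - 3) * Real.log (x - 3) ≤ (n:ℝ) * Real.log n := by
    have h1 : (0:ℝ) ≤ Real.log (x - 3) := Real.log_nonneg (by linarith)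
    have h2 : Real.log (x - 3) ≤ Real.log n := Real.log_le_log (by linarith) (by linarith)
    nlinarith
  nlinarith

lemma L1 (c : ℝ) : Tendsto (fun s : ℝ => (s + c) / s) atTop (nhds 1) := by
  have h : Tendsto (fun s : ℝ => 1 + c * s⁻¹) atTop (nhds 1) := by
    have := tendsto_inv_atTop_zero (𝕜 := ℝ)
    have h2 : Tendsto (fun s : ℝ => c * s⁻¹) atTop (nhds 0) := by
      simpa using this.const_mul c
    simpa using (tendsto_const_nhds (x := (1:ℝ))).add h2
  refine h.congr' ?_
  filter_upwards [eventually_gt_atTop (0:ℝ)] with s hs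
  field_simp

lemma L2 : Tendsto (fun s : ℝ => Real.log s / s) atTop (nhds 0) := by
  simpa using Real.isLittleO_log_id_atTop.tendsto_div_nhds_zero

lemma L3 : Tendsto (fun t : ℝ => Real.log (Real.log t) / Real.log t) atTop (nhds 0) :=
  L2.comp Real.tendsto_log_atTop

lemma Lsub : Tendsto (fun t : ℝ => t - 3) atTop atTop :=
  tendsto_atTop_add_const_right _ _ tendsto_id

lemma L4 : Tendsto (fun t : ℝ => Real.log (t - 3) / Real.log t) atTop (nhds 1) := by
  have hinv : Tendsto (fun t : ℝ => (Real.log t)⁻¹) atTop (nhds 0) :=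
    (tendsto_inv_atTop_zero).comp Real.tendsto_log_atTop
  have h1 : Tendsto (fun t : ℝ => 1 - 3 / t) atTop (nhds 1) := by
    have h0 : Tendsto (fun t : ℝ => 3 / t) atTop (nhds 0) := by
      simpa [div_eq_mul_inv] using (tendsto_inv_atTop_zero (𝕜 := ℝ)).const_mul 3
    simpa using (tendsto_const_nhds (x := (1:ℝ))).sub h0
  have he : Tendsto (fun t : ℝ => Real.log (1 - 3 / t)) atTop (nhds 0) := by
    have hc : ContinuousAt Real.log 1 := Real.continuousAt_log one_ne_zero
    have := hc.tendsto.comp h1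
    simpa [Function.comp_def] using this
  have hmain : Tendsto (fun t : ℝ => 1 + Real.log (1 - 3 / t) * (Real.log t)⁻¹)
      atTop (nhds 1) := by
    have := he.mul hinv
    simpa using (tendsto_const_nhds (x := (1:ℝ))).add this
  refine hmain.congr' ?_
  filter_upwards [eventually_gt_atTop (3:ℝ), eventually_gt_atTop (1:ℝ)] with t h3 h1t
  have ht0 : (0:ℝ) < t := by linarith
  have hlt : (0:ℝ) < Real.log t := Real.log_pos h1t
  have hfac : (0:ℝ) < 1 - 3 / t := by
    rw [sub_pos, div_lt_one ht0]; linarith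
  have hsplit : Real.log (t - 3) = Real.log t + Real.log (1 - 3 / t) := by
    rw [← Real.log_mul ht0.ne' hfac.ne']
    congr 1
    field_simp
  rw [hsplit, add_div, div_self hlt.ne']
  ring

lemma L6 : Tendsto (fun t : ℝ => t / (t - 3)) atTop (nhds 1) := by
  have := (L1 3).comp Lsub
  refine this.congr' ?_
  filter_upwards with t
  simp [Function.comp]

lemma L5 : Tendsto (fun t : ℝ => Real.log t / (Real.log (t - 3) - 2)) atTop (nhds 1) := by
  have hA : Tendsto (fun t : ℝ => Real.log t / Real.log (t - 3)) atTop (nhds 1) := by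
    have := L4.inv₀ one_ne_zero
    simp only [inv_one] at this
    refine this.congr' ?_
    filter_upwards [eventually_gt_atTop (4:ℝ)] with t ht
    rw [inv_div]
  have hB : Tendsto (fun t : ℝ => Real.log (t - 3) / (Real.log (t - 3) - 2)) atTop (nhds 1) := by
    have base : Tendsto (fun s : ℝ => s / (s - 2)) atTop (nhds 1) := by
      have := (L1 2).comp (tendsto_atTop_add_const_right atTop (-2) tendsto_id)
      refine this.congr' ?_
      filter_upwards with s
      simp only [Function.comp, id]
      ring_nf
    exact base.comp (Real.tendsto_log_atTop.comp Lsub)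
  have := hA.mul hB
  rw [mul_one] at this
  refine this.congr' ?_
  filter_upwards [eventually_gt_atTop (4:ℝ)] with t ht
  have hl : Real.log (t - 3) ≠ 0 := (Real.log_pos (by linarith)).ne'
  field_simp

lemma L7 (c : ℝ) : Tendsto (fun s : ℝ => (s + Real.log s + c) / s) atTop (nhds 1) := by
  have hinv : Tendsto (fun s : ℝ => c * s⁻¹) atTop (nhds 0) := by
    simpa using (tendsto_inv_atTop_zero (𝕜 := ℝ)).const_mul c
  have h : Tendsto (fun s : ℝ => 1 + Real.log s / s + c * s⁻¹) atTop (nhds 1) := by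
    have := ((tendsto_const_nhds (x := (1:ℝ))).add L2).add hinv
    simpa using this
  refine h.congr' ?_
  filter_upwards [eventually_gt_atTop (0:ℝ)] with s hs
  rw [add_div, add_div, div_self hs.ne']
  ring

/-- Equation (1.9): the inverse Gamma function of `r^{2/β}` grows like
`2 log r / (β log log r)` as `r → ∞`. -/
theorem inverse_gamma_asymptotics
    (β : ℝ) (hβ : 0 < β) (g : ℝ → ℝ)
    (hg : ∀ᶠ r in Filter.atTop, 2 ≤ g r ∧ Real.Gamma (g r) = r ^ (2 / β)) :
    Filter.Tendsto
      (fun r : ℝ => g r * β * Real.log (Real.log r) / (2 * Real.log r))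
      Filter.atTop (nhds 1) := by
  have hβ2 : 0 < 2 / β := by positivity
  -- the basic identity
  have hφeq : ∀ᶠ r in atTop, Real.log (Real.Gamma (g r)) = 2 / β * Real.log r := by
    filter_upwards [hg, eventually_gt_atTop (0:ℝ)] with r hr hr0
    rw [hr.2, Real.log_rpow hr0]
  have hφtop : Tendsto (fun r : ℝ => 2 / β * Real.log r) atTop atTop :=
    Real.tendsto_log_atTop.const_mul_atTop hβ2
  -- g tends to infinity
  have hu : Tendsto g atTop atTop := by
    rw [tendsto_atTop]
    intro b
    set M := max b 2 with hM
    have hM2 : (2:ℝ) ≤ M := le_max_right _ _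
    filter_upwards [hg, hφeq, hφtop.eventually_ge_atTop (M * M)] with r hr hfe hMM
    have h2 : 2 ≤ g r := hr.1
    have hA := log_Gamma_le h2
    have hlog : Real.log (g r) ≤ g r := by
      have := Real.log_le_sub_one_of_pos (by linarith : (0:ℝ) < g r)
      linarith
    have hgg : M * M ≤ g r * g r := by
      rw [← hfe] at hMM
      nlinarith [Real.log_nonneg (by linarith : (1:ℝ) ≤ g r)]
    have : M ≤ g r := by nlinarith
    calc b ≤ M := le_max_left _ _
      _ ≤ g r := this
  -- collected eventual facts
  have hfacts : ∀ᶠ r in atTop,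
      2 ≤ g r ∧
      Real.log (Real.Gamma (g r)) = 2 / β * Real.log r ∧
      7 ≤ g r ∧ 3 + Real.exp 3 ≤ g r ∧ 1 ≤ Real.log r := by
    filter_upwards [hg, hφeq, hu.eventually_ge_atTop 7,
      hu.eventually_ge_atTop (3 + Real.exp 3),
      eventually_ge_atTop (Real.exp 1)] with r h1 h2 h3 h4 h5
    refine ⟨h1.1, h2, h3, h4, ?_⟩
    calc (1:ℝ) = Real.log (Real.exp 1) := (Real.log_exp 1).symm
      _ ≤ Real.log r := Real.log_le_log (Real.exp_pos 1) h5
  -- key bounds, packaged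
  have hbounds : ∀ᶠ r in atTop,
      7 ≤ g r ∧ 0 < Real.log (g r) ∧ 0 < 2 / β * Real.log r ∧
      2 / β * Real.log r ≤ g r * Real.log (g r) ∧
      (g r - 3) * (Real.log (g r - 3) - 2) ≤ 2 / β * Real.log r ∧
      g r / 2 ≤ 2 / β * Real.log r ∧
      1 ≤ Real.log (g r - 3) - 2 ∧
      0 ≤ Real.log (Real.log r) ∧
      Real.log (Real.log r) = Real.log (β / 2) + Real.log (2 / β * Real.log r) := by
    filter_upwards [hfacts] with r hr
    obtain ⟨h2, heq, h7, hexp, hlr⟩ := hr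
    have hlt : 0 < Real.log (g r) := Real.log_pos (by linarith)
    have hTup : 2 / β * Real.log r ≤ g r * Real.log (g r) := by
      rw [← heq]; exact log_Gamma_le h2
    have hlow := log_Gamma_ge (by linarith : (4:ℝ) ≤ g r)
    have hTlo : (g r - 3) * (Real.log (g r - 3) - 2) ≤ 2 / β * Real.log r := by
      rw [← heq]
      nlinarith
    have hl3 : 3 ≤ Real.log (g r - 3) := by
      calc (3:ℝ) = Real.log (Real.exp 3) := (Real.log_exp 3).symm
        _ ≤ Real.log (g r - 3) := Real.log_le_log (Real.exp_pos 3) (by linarith)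
    have hhalf : g r / 2 ≤ 2 / β * Real.log r := by nlinarith
    have hTpos : 0 < 2 / β * Real.log r := by nlinarith
    have hlogr : Real.log r = β / 2 * (2 / β * Real.log r) := by field_simp
    refine ⟨h7, hlt, hTpos, hTup, hTlo, hhalf, by linarith, Real.log_nonneg hlr, ?_⟩
    rw [show Real.log (Real.log r) = Real.log (β / 2 * (2 / β * Real.log r)) by rw [← hlogr],
      Real.log_mul (by positivity) hTpos.ne']
  -- convergence of the lower bound Lo
  have cLo : Tendsto (fun r : ℝ => Real.log (Real.log r) / Real.log (g r))
      atTop (nhds 1) := by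
    have cA : Tendsto (fun t : ℝ => (Real.log t + (Real.log (β / 2) - Real.log 2)) / Real.log t)
        atTop (nhds 1) := (L1 _).comp Real.tendsto_log_atTop
    have cB : Tendsto
        (fun t : ℝ => (Real.log t + Real.log (Real.log t) + Real.log (β / 2)) / Real.log t)
        atTop (nhds 1) := (L7 _).comp Real.tendsto_log_atTop
    refine tendsto_of_tendsto_of_tendsto_of_le_of_le' (cA.comp hu) (cB.comp hu) ?_ ?_
    · filter_upwards [hbounds] with r hb
      obtain ⟨h7, hlt, hTpos, hTup, hTlo, hhalf, hl32, hLnn, hLeq⟩ := hb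
      have hlogT_ge : Real.log (g r) - Real.log 2 ≤ Real.log (2 / β * Real.log r) := by
        have := Real.log_le_log (by positivity : (0:ℝ) < g r / 2) hhalf
        rwa [Real.log_div (by positivity : g r ≠ 0) (by norm_num)] at this
      rw [hLeq]
      simp only [Function.comp]
      rw [div_le_div_iff₀ hlt hlt]
      have hnum : Real.log (g r) + (Real.log (β / 2) - Real.log 2)
          ≤ Real.log (β / 2) + Real.log (2 / β * Real.log r) := by linarith
      exact mul_le_mul_of_nonneg_right hnum hlt.le
    · filter_upwards [hbounds] with r hb
      obtain ⟨h7, hlt, hTpos, hTup, hTlo, hhalf, hl32, hLnn, hLeq⟩ := hb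
      have hlogT_le : Real.log (2 / β * Real.log r)
          ≤ Real.log (g r) + Real.log (Real.log (g r)) := by
        have := Real.log_le_log hTpos hTup
        rwa [Real.log_mul (by positivity : g r ≠ 0) hlt.ne'] at this
      rw [hLeq]
      simp only [Function.comp]
      rw [div_le_div_iff₀ hlt hlt]
      have hnum : Real.log (β / 2) + Real.log (2 / β * Real.log r)
          ≤ Real.log (g r) + Real.log (Real.log (g r)) + Real.log (β / 2) := by linarith
      exact mul_le_mul_of_nonneg_right hnum hlt.le
  -- convergence of the correction factor
  have cF : Tendsto (fun t : ℝ => t / (t - 3) * (Real.log t / (Real.log (t - 3) - 2)))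
      atTop (nhds 1) := by
    have := L6.mul L5
    simpa using this
  have cHi : Tendsto (fun r : ℝ => Real.log (Real.log r) / Real.log (g r) *
      (g r / (g r - 3) * (Real.log (g r) / (Real.log (g r - 3) - 2)))) atTop (nhds 1) := by
    have := cLo.mul (cF.comp hu)
    simpa using this
  -- final squeeze
  refine tendsto_of_tendsto_of_tendsto_of_le_of_le' cLo cHi ?_ ?_
  · filter_upwards [hbounds] with r hb
    obtain ⟨h7, hlt, hTpos, hTup, hTlo, hhalf, hl32, hLnn, hLeq⟩ := hb
    have hGeq : g r * β * Real.log (Real.log r) / (2 * Real.log r)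
        = g r * Real.log (Real.log r) / (2 / β * Real.log r) := by
      rw [show 2 / β * Real.log r = 2 * Real.log r / β by ring, div_div_eq_mul_div]
      ring
    rw [hGeq, div_le_div_iff₀ hlt hTpos]
    nlinarith [mul_le_mul_of_nonneg_left hTup hLnn]
  · filter_upwards [hbounds] with r hb
    obtain ⟨h7, hlt, hTpos, hTup, hTlo, hhalf, hl32, hLnn, hLeq⟩ := hb
    have htpos : (0:ℝ) < g r := by linarith
    have ht3 : (0:ℝ) < g r - 3 := by linarith
    have hl2pos : (0:ℝ) < Real.log (g r - 3) - 2 := by linarith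
    have hGeq : g r * β * Real.log (Real.log r) / (2 * Real.log r)
        = g r * Real.log (Real.log r) / (2 / β * Real.log r) := by
      rw [show 2 / β * Real.log r = 2 * Real.log r / β by ring, div_div_eq_mul_div]
      ring
    have hRHS : Real.log (Real.log r) / Real.log (g r) *
        (g r / (g r - 3) * (Real.log (g r) / (Real.log (g r - 3) - 2)))
        = g r * Real.log (Real.log r) / ((g r - 3) * (Real.log (g r - 3) - 2)) := by
      field_simp
    rw [hGeq, hRHS, div_le_div_iff₀ hTpos (by positivity)]
    nlinarith [mul_le_mul_of_nonneg_left hTlo (by positivity : (0:ℝ) ≤ g r * Real.log (Real.log r))]
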